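/- Let V be a vector space over a field K (K = ℚ or ℝ) and let C be a cone in V (closed under addition and under multiplication by positive scalars of K). Then C is open in the strong topology (i.e., C ∩ W is open for every finite-dimensional subspace W) if and only if for every a ∈ C and every x ∈ V there exists δ₀ ∈ K with δ₀ > 0 such that a + δ₀·x ∈ C. -/

import Mathlib

/-- `U` is open in the strong topology on `V`: its preimage under every linear map
from a finite-dimensional coordinate space `K^n` is open. -/
def StrongOpen (K : Type*) [Field K] [LinearOrder K] [IsStrictOrderedRing K] [TopologicalSpace K]
    {V : Type*} [AddCommGroup V] [Module K V] (U : Set V) : Prop :=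
  ∀ (n : ℕ) (φ : (Fin n → K) →ₗ[K] V), IsOpen (φ ⁻¹' U)

/-- `C` is a cone: closed under addition and multiplication by positive scalars. -/
def IsCone (K : Type*) [Field K] [LinearOrder K] [IsStrictOrderedRing K] {V : Type*} [AddCommGroup V]
    [Module K V] (C : Set V) : Prop :=
  (∀ x ∈ C, ∀ y ∈ C, x + y ∈ C) ∧ ∀ x ∈ C, ∀ l : K, 0 < l → l • x ∈ C

/-- If `a ∈ C` and `a + δ₁ • x ∈ C`, then `a + t • x ∈ C` for `0 < t < δ₁`. -/
lemma cone_segment {K : Type*} [Field K] [LinearOrder K] [IsStrictOrderedRing K] {V : Type*} [AddCommGroup V]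
    [Module K V] {C : Set V} (hC : IsCone K C) {a x : V} (ha : a ∈ C) {δ₁ : K}
    (hδ₁ : 0 < δ₁) (hmem : a + δ₁ • x ∈ C) {t : K} (ht : 0 < t) (htδ : t < δ₁) :
    a + t • x ∈ C := by
  obtain ⟨hadd, hsmul⟩ := hC
  have h1 : (t / δ₁) • (a + δ₁ • x) ∈ C := hsmul _ hmem _ (div_pos ht hδ₁)
  have h2 : (1 - t / δ₁) • a ∈ C := hsmul _ ha _ (by
    have : t / δ₁ < 1 := (div_lt_one hδ₁).2 htδ
    linarith)
  have key : a + t • x = (t / δ₁) • (a + δ₁ • x) + (1 - t / δ₁) • a := by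
    rw [smul_add, smul_smul, div_mul_cancel₀ _ hδ₁.ne', sub_smul, one_smul]
    abel
  rw [key]
  exact hadd _ h1 _ h2

/-- Two-sided version: there is `δ > 0` with `a + t • x ∈ C` for all `|t| < δ`. -/
lemma cone_two_sided {K : Type*} [Field K] [LinearOrder K] [IsStrictOrderedRing K] {V : Type*} [AddCommGroup V]
    [Module K V] {C : Set V} (hC : IsCone K C)
    (h : ∀ a ∈ C, ∀ x : V, ∃ δ₀ : K, 0 < δ₀ ∧ a + δ₀ • x ∈ C)
    {a : V} (ha : a ∈ C) (x : V) :
    ∃ δ : K, 0 < δ ∧ ∀ t : K, |t| < δ → a + t • x ∈ C := by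
  obtain ⟨δ₁, hδ₁, hm₁⟩ := h a ha x
  obtain ⟨δ₂, hδ₂, hm₂⟩ := h a ha (-x)
  refine ⟨min δ₁ δ₂, lt_min hδ₁ hδ₂, fun t ht => ?_⟩
  rw [abs_lt] at ht
  rcases lt_trichotomy t 0 with h0 | h0 | h0
  · have : a + t • x = a + (-t) • (-x) := by rw [neg_smul, smul_neg, neg_neg]
    rw [this]
    exact cone_segment hC ha hδ₂ hm₂ (by linarith) (by have hmr := min_le_right δ₁ δ₂; have h1 := ht.1; linarith)
  · simpa [h0] using ha
  · exact cone_segment hC ha hδ₁ hm₁ h0 (lt_of_lt_of_le ht.2 (min_le_left _ _))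

lemma cone_add_sum {K : Type*} [Field K] [LinearOrder K] [IsStrictOrderedRing K] {V : Type*} [AddCommGroup V]
    [Module K V] {C : Set V} (hC : IsCone K C) {a : V} (ha : a ∈ C)
    {ι : Type*} (s : Finset ι) (f : ι → V) (hf : ∀ i ∈ s, f i ∈ C) :
    a + ∑ i ∈ s, f i ∈ C := by
  classical
  revert hf
  induction s using Finset.induction_on with
  | empty => intro _; simpa using ha
  | @insert j s' hj ih =>
    intro hf
    rw [Finset.sum_insert hj]
    have h1 : a + ∑ i ∈ s', f i ∈ C := ih (fun i hi => hf i (Finset.mem_insert_of_mem hi))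
    have h2 : f j ∈ C := hf j (Finset.mem_insert_self _ _)
    have : a + (f j + ∑ i ∈ s', f i) = (a + ∑ i ∈ s', f i) + f j := by abel
    rw [this]
    exact hC.1 _ h1 _ h2

theorem cone_strongOpen_iff (K : Type*) [Field K] [LinearOrder K] [IsStrictOrderedRing K] [TopologicalSpace K]
    [OrderTopology K] {V : Type*} [AddCommGroup V] [Module K V]
    (C : Set V) (hC : IsCone K C) :
    StrongOpen K C ↔ ∀ a ∈ C, ∀ x : V, ∃ δ₀ : K, 0 < δ₀ ∧ a + δ₀ • x ∈ C := by
  constructor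
  · intro hopen a ha x
    set φ : (Fin 2 → K) →ₗ[K] V :=
      (LinearMap.proj 0).smulRight a + (LinearMap.proj 1).smulRight x with hφ
    have hO : IsOpen (φ ⁻¹' C) := hopen 2 φ
    have hg : Continuous (fun δ : K => (fun i : Fin 2 => if i = 0 then 1 else δ)) := by
      refine continuous_pi fun i => ?_
      by_cases h : i = 0 <;> simp [h] <;> [exact continuous_const; exact continuous_id]
    have h0 : (fun δ : K => (fun i : Fin 2 => if i = 0 then 1 else δ)) 0 ∈ φ ⁻¹' C := by
      simp only [Set.mem_preimage, hφ, LinearMap.add_apply, LinearMap.smulRight_apply,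
        LinearMap.proj_apply]
      norm_num
      simpa using ha
    have hnhds : (fun δ : K => (fun i : Fin 2 => if i = 0 then 1 else δ)) ⁻¹' (φ ⁻¹' C)
        ∈ nhds (0 : K) := (hO.preimage hg).mem_nhds h0
    obtain ⟨l, u, hlu, hsub⟩ := mem_nhds_iff_exists_Ioo_subset.1 hnhds
    obtain ⟨hl, hu⟩ := hlu
    refine ⟨u / 2, by linarith, ?_⟩
    have : (fun i : Fin 2 => if i = 0 then 1 else u / 2) ∈ φ ⁻¹' C :=
      hsub ⟨by linarith, by linarith⟩
    simp only [Set.mem_preimage, hφ, LinearMap.add_apply, LinearMap.smulRight_apply,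
      LinearMap.proj_apply] at this
    norm_num at this
    exact this
  · intro h n φ
    rw [isOpen_iff_forall_mem_open]
    intro c hc
    set a : V := φ c with haa
    have ha : a ∈ C := hc
    set x : Fin n → V := fun i => φ (fun j => if i = j then 1 else 0) with hx
    choose δ hδpos hδmem using fun i => cone_two_sided hC h ha (x i)
    set m : K := (n : K) + 1 with hm
    have hmpos : 0 < m := by positivity
    refine ⟨Set.pi Set.univ (fun i => Set.Ioo (c i - δ i / m) (c i + δ i / m)), ?_, ?_, ?_⟩
    · intro t ht
      simp only [Set.mem_pi, Set.mem_univ, Set.mem_Ioo, forall_true_left] at ht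
      have hφt : φ t = a + ∑ i, (t i - c i) • x i := by
        have h1 : φ t = φ c + φ (t - c) := by rw [← map_add]; congr 1; abel
        rw [h1, LinearMap.pi_apply_eq_sum_univ φ (t - c)]
        rfl
      have key : m • (a + ∑ i, (t i - c i) • x i)
          = a + ∑ i : Fin n, (a + (m * (t i - c i)) • x i) := by
        rw [Finset.sum_add_distrib, Finset.sum_const, Finset.card_univ, Fintype.card_fin,
          smul_add, Finset.smul_sum]
        have : ∀ i : Fin n, m • ((t i - c i) • x i) = (m * (t i - c i)) • x i := fun i =>
          (smul_smul m _ _)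
        rw [Finset.sum_congr rfl (fun i _ => this i), hm, add_smul, one_smul,
          Nat.cast_smul_eq_nsmul]
        abel
      have hinner : a + ∑ i : Fin n, (a + (m * (t i - c i)) • x i) ∈ C := by
        refine cone_add_sum hC ha _ _ (fun i _ => ?_)
        refine hδmem i _ ?_
        have hti : |t i - c i| < δ i / m := by
          rw [abs_lt]; constructor <;> [linarith [(ht i).1]; linarith [(ht i).2]]
        calc |m * (t i - c i)| = m * |t i - c i| := by
              rw [abs_mul, abs_of_pos hmpos]
          _ < m * (δ i / m) := by exact mul_lt_mul_of_pos_left hti hmpos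
          _ = δ i := by field_simp
      have : φ t = m⁻¹ • (a + ∑ i : Fin n, (a + (m * (t i - c i)) • x i)) := by
        rw [← key, hφt, inv_smul_smul₀ hmpos.ne']
      rw [Set.mem_preimage, this]
      exact hC.2 _ hinner _ (inv_pos.2 hmpos)
    · exact isOpen_set_pi Set.finite_univ (fun i _ => isOpen_Ioo)
    · intro i _
      constructor <;> [linarith [div_pos (hδpos i) hmpos]; linarith [div_pos (hδpos i) hmpos]]
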